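/- The graph K_{⌈(n−2)/2⌉,⌊(n−2)/2⌋} • K₃ is non-bipartite and contains no cycle of length 2k+1 for any k ≥ 2; its only odd cycles are triangles. -/

import Mathlib

open SimpleGraph

noncomputable def specRad {V : Type*} [Fintype V] [DecidableEq V] (G : SimpleGraph V) : ℝ :=
  letI := Classical.decRel G.Adj
  have h : (G.adjMatrix ℝ).IsHermitian := by
    ext i j
    simp [Matrix.conjTranspose_apply, SimpleGraph.adjMatrix_apply, G.adj_comm i j]
  ⨆ i, h.eigenvalues i

/-- `K_{a,b} • K₃`: the complete bipartite graph `K_{a,b}` with a triangle glued at a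
vertex of the part of size `b` (the part `Fin b`), using two new vertices `Fin 2`. -/
def KdotK3 (a b : ℕ) (hb : 0 < b) : SimpleGraph ((Fin a ⊕ Fin b) ⊕ Fin 2) :=
  SimpleGraph.fromRel (fun x y =>
    (∃ i j, x = Sum.inl (Sum.inl i) ∧ y = Sum.inl (Sum.inr j)) ∨
    (x = Sum.inl (Sum.inr ⟨0, hb⟩) ∧ y = Sum.inr 0) ∨
    (x = Sum.inl (Sum.inr ⟨0, hb⟩) ∧ y = Sum.inr 1) ∨
    (x = Sum.inr 0 ∧ y = Sum.inr 1))

section Aux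

open SimpleGraph Walk

variable {a b : ℕ} {hb : 0 < b}

lemma nbr_x {u : (Fin a ⊕ Fin b) ⊕ Fin 2}
    (h : (KdotK3 a b hb).Adj (Sum.inr 0) u) :
    u = Sum.inl (Sum.inr ⟨0, hb⟩) ∨ u = Sum.inr 1 := by
  rw [KdotK3, SimpleGraph.fromRel_adj] at h
  obtain ⟨hne, h | h⟩ := h <;>
    rcases h with ⟨i, j, h1, h2⟩ | ⟨h1, h2⟩ | ⟨h1, h2⟩ | ⟨h1, h2⟩ <;> simp_all

lemma nbr_y {u : (Fin a ⊕ Fin b) ⊕ Fin 2}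
    (h : (KdotK3 a b hb).Adj (Sum.inr 1) u) :
    u = Sum.inl (Sum.inr ⟨0, hb⟩) ∨ u = Sum.inr 0 := by
  rw [KdotK3, SimpleGraph.fromRel_adj] at h
  obtain ⟨hne, h | h⟩ := h <;>
    rcases h with ⟨i, j, h1, h2⟩ | ⟨h1, h2⟩ | ⟨h1, h2⟩ | ⟨h1, h2⟩ <;> simp_all

/-- Any path from `y` to `w` avoiding `x` has length 1. -/
lemma path_y_w (r : (KdotK3 a b hb).Walk (Sum.inr 1) (Sum.inl (Sum.inr ⟨0, hb⟩)))
    (hr : r.IsPath) (hx : (Sum.inr 0 : (Fin a ⊕ Fin b) ⊕ Fin 2) ∉ r.support) :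
    r.length = 1 := by
  cases r with
  | cons h s =>
    rcases nbr_y h with h1 | h1
    · subst h1
      cases s with
      | nil => simp
      | cons h' s' =>
        have hn := hr.support_nodup
        simp [SimpleGraph.Walk.support_cons] at hn
    · subst h1; simp [SimpleGraph.Walk.support_cons] at hx

/-- Any path from `x` to `w` not using the edge `xw` has length 2. -/
lemma path_x_w (p : (KdotK3 a b hb).Walk (Sum.inr 0) (Sum.inl (Sum.inr ⟨0, hb⟩)))
    (hp : p.IsPath)
    (he : s(Sum.inr 0, Sum.inl (Sum.inr ⟨0, hb⟩)) ∉ p.edges) :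
    p.length = 2 := by
  cases p with
  | cons h s =>
    rcases nbr_x h with h1 | h1
    · subst h1; simp at he
    · subst h1
      have hx : (Sum.inr 0 : (Fin a ⊕ Fin b) ⊕ Fin 2) ∉ s.support := by
        have hn := hp.support_nodup
        simp [SimpleGraph.Walk.support_cons] at hn
        tauto
      have := path_y_w s (hp.of_cons) hx
      simp [this]

/-- Any path from `x` to `y` not using the edge `xy` has length 2. -/
lemma path_x_y (p : (KdotK3 a b hb).Walk (Sum.inr 0) (Sum.inr 1))
    (hp : p.IsPath)
    (he : s(Sum.inr 0, Sum.inr 1) ∉ p.edges) :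
    p.length = 2 := by
  cases p with
  | cons h s =>
    rcases nbr_x h with h1 | h1
    · subst h1
      have hx : (Sum.inr 0 : (Fin a ⊕ Fin b) ⊕ Fin 2) ∉ s.support := by
        have hn := hp.support_nodup
        simp [SimpleGraph.Walk.support_cons] at hn
        tauto
      have hx' : (Sum.inr 0 : (Fin a ⊕ Fin b) ⊕ Fin 2) ∉ s.reverse.support := by
        simpa using hx
      have := path_y_w s.reverse (hp.of_cons.reverse) hx'
      simp at this
      simp [this]
    · subst h1; simp at he

/-- Every cycle through `x = inr 0` has length 3. -/
lemma cycle_from_x (c : (KdotK3 a b hb).Walk (Sum.inr 0) (Sum.inr 0)) (hc : c.IsCycle) :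
    c.length = 3 := by
  cases c with
  | nil => exact absurd hc (by simp [SimpleGraph.Walk.isCycle_def])
  | cons h p =>
    rw [SimpleGraph.Walk.cons_isCycle_iff] at hc
    obtain ⟨hp, he⟩ := hc
    rcases nbr_x h with h1 | h1 <;> subst h1
    · have := path_x_w p.reverse hp.reverse
        (by simp only [SimpleGraph.Walk.edges_reverse, List.mem_reverse]; exact he)
      simp at this; simp [this]
    · have := path_x_y p.reverse hp.reverse
        (by simp only [SimpleGraph.Walk.edges_reverse, List.mem_reverse]; exact he)
      simp at this; simp [this]

/-- Parity function: `0` on the `Fin a` part and the two triangle tips, `1` on the `Fin b` part. -/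
def par : (Fin a ⊕ Fin b) ⊕ Fin 2 → ZMod 2
  | Sum.inl (Sum.inl _) => 0
  | Sum.inl (Sum.inr _) => 1
  | Sum.inr _ => 0

lemma par_step {u v : (Fin a ⊕ Fin b) ⊕ Fin 2} (h : (KdotK3 a b hb).Adj u v)
    (hne : s(u, v) ≠ s(Sum.inr 0, Sum.inr 1)) : par v = par u + 1 := by
  rw [KdotK3, SimpleGraph.fromRel_adj] at h
  obtain ⟨hne', h | h⟩ := h <;>
    rcases h with ⟨i, j, h1, h2⟩ | ⟨h1, h2⟩ | ⟨h1, h2⟩ | ⟨h1, h2⟩ <;>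
      subst h1 <;> subst h2 <;> simp_all [par] <;> decide

lemma walk_parity {u v : (Fin a ⊕ Fin b) ⊕ Fin 2} (p : (KdotK3 a b hb).Walk u v) :
    (p.length : ZMod 2) + par u =
      par v + (p.edges.count s(Sum.inr 0, Sum.inr 1) : ℕ) := by
  induction p with
  | nil => simp
  | @cons u u' v h q ih =>
    by_cases hxy : s(u, u') = s(Sum.inr 0, Sum.inr 1)
    · have hu : par u = par u' := by
        rcases Sym2.eq_iff.mp hxy with ⟨h1, h2⟩ | ⟨h1, h2⟩ <;> subst h1 <;> subst h2 <;> rfl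
      simp only [SimpleGraph.Walk.length_cons, SimpleGraph.Walk.edges_cons, List.count_cons,
        beq_iff_eq, if_pos hxy]
      push_cast
      rw [hu]
      linear_combination ih
    · have hu : par u' = par u + 1 := par_step h hxy
      simp only [SimpleGraph.Walk.length_cons, SimpleGraph.Walk.edges_cons, List.count_cons,
        beq_iff_eq, if_neg hxy]
      push_cast
      rw [hu] at ih
      linear_combination ih

/-- Any odd closed cycle has length 3. -/
lemma odd_cycle_len {v : (Fin a ⊕ Fin b) ⊕ Fin 2} (c : (KdotK3 a b hb).Walk v v)
    (hc : c.IsCycle) (ho : Odd c.length) : c.length = 3 := by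
  have hpar := walk_parity (hb := hb) c
  have h1 : (c.length : ZMod 2) = 1 := by
    obtain ⟨m, hm⟩ := ho
    rw [hm]
    push_cast
    rw [show (2 : ZMod 2) = 0 by decide, zero_mul, zero_add]
  rw [h1] at hpar
  have hcount : (c.edges.count s(Sum.inr 0, Sum.inr 1) : ZMod 2) = 1 := by
    linear_combination -hpar
  have hmem : s(Sum.inr 0, Sum.inr 1) ∈ c.edges := by
    by_contra hne
    rw [List.count_eq_zero_of_not_mem hne] at hcount
    simp at hcount
  have hx : (Sum.inr 0 : (Fin a ⊕ Fin b) ⊕ Fin 2) ∈ c.support :=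
    c.fst_mem_support_of_mem_edges hmem
  have h3 := cycle_from_x (c.rotate _ hx) ((SimpleGraph.Walk.isCycle_rotate hx).mpr hc)
  have hlen : (c.rotate _ hx).length = c.length := by
    rw [← SimpleGraph.Walk.length_edges, ← SimpleGraph.Walk.length_edges]
    exact (c.rotate_edges _ hx).perm.length_eq
  omega

end Aux

theorem stmt15 (a b : ℕ) (hb : 0 < b) :
    ¬ (KdotK3 a b hb).Colorable 2 ∧
    (∀ k : ℕ, 2 ≤ k →
      ¬ ∃ (v : (Fin a ⊕ Fin b) ⊕ Fin 2) (c : (KdotK3 a b hb).Walk v v),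
          c.IsCycle ∧ c.length = 2 * k + 1) ∧
    (∀ (v : (Fin a ⊕ Fin b) ⊕ Fin 2) (c : (KdotK3 a b hb).Walk v v),
      c.IsCycle → Odd c.length → c.length = 3) := by
  have hwx : (KdotK3 a b hb).Adj (Sum.inl (Sum.inr ⟨0, hb⟩)) (Sum.inr 0) := by
    rw [KdotK3, SimpleGraph.fromRel_adj]
    exact ⟨by simp, Or.inl (Or.inr (Or.inl ⟨rfl, rfl⟩))⟩
  have hwy : (KdotK3 a b hb).Adj (Sum.inl (Sum.inr ⟨0, hb⟩)) (Sum.inr 1) := by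
    rw [KdotK3, SimpleGraph.fromRel_adj]
    exact ⟨by simp, Or.inl (Or.inr (Or.inr (Or.inl ⟨rfl, rfl⟩)))⟩
  have hxy : (KdotK3 a b hb).Adj (Sum.inr 0) (Sum.inr 1) := by
    rw [KdotK3, SimpleGraph.fromRel_adj]
    exact ⟨by simp, Or.inl (Or.inr (Or.inr (Or.inr ⟨rfl, rfl⟩)))⟩
  refine ⟨?_, ?_, ?_⟩
  · rintro ⟨C⟩
    have h1 := C.valid hwx
    have h2 := C.valid hwy
    have h3 := C.valid hxy
    have b1 := (C (Sum.inl (Sum.inr ⟨0, hb⟩))).isLt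
    have b2 := (C (Sum.inr 0)).isLt
    have b3 := (C (Sum.inr 1)).isLt
    rw [Fin.ne_iff_vne] at h1 h2 h3
    omega
  · rintro k hk ⟨v, c, hc, hlen⟩
    have := odd_cycle_len c hc (by rw [hlen]; exact ⟨k, by ring⟩)
    omega
  · exact fun v c hc ho => odd_cycle_len c hc ho
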